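/- For every integer k ≥ 2, there exists a finite connected simple graph of diameter 3 and order k + 3^k that is uniquely dimensional with metric dimension k. -/

import Mathlib

open SimpleGraph

/-- `W` is a resolving set for `G`: any two distinct vertices are distinguished
by their distance to some vertex of `W`. -/
def IsResolvingSet {V : Type*} (G : SimpleGraph V) (W : Finset V) : Prop :=
  ∀ u v : V, u ≠ v → ∃ w ∈ W, G.dist u w ≠ G.dist v w

/-- The metric dimension of `G`: the minimum cardinality of a resolving set. -/
noncomputable def metricDim {V : Type*} (G : SimpleGraph V) : ℕ :=
  sInf {k | ∃ W : Finset V, IsResolvingSet G W ∧ W.card = k}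

/-- `B` is a metric basis: a resolving set of minimum cardinality. -/
def IsMetricBasis {V : Type*} (G : SimpleGraph V) (B : Finset V) : Prop :=
  IsResolvingSet G B ∧ B.card = metricDim G

/-- `G` is uniquely dimensional: it has exactly one metric basis. -/
def UniquelyDimensional {V : Type*} (G : SimpleGraph V) : Prop :=
  ∃! B : Finset V, IsMetricBasis G B

/-- `G` is uniquely `k`-dimensional: a unique metric basis and metric dimension `k`. -/
def UniquelyKDimensional {V : Type*} (G : SimpleGraph V) (k : ℕ) : Prop :=
  UniquelyDimensional G ∧ metricDim G = k


/- ## Transport along isomorphisms -/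
section Transport

variable {V V' : Type*} {A : SimpleGraph V} {B : SimpleGraph V'}

lemma iso_edist_le (φ : A ≃g B) (u v : V) : B.edist (φ u) (φ v) ≤ A.edist u v := by
  rcases eq_or_ne (A.edist u v) ⊤ with h | h
  · simp [h]
  · obtain ⟨p, hp⟩ := exists_walk_of_edist_ne_top h
    rw [← hp]
    calc B.edist (φ u) (φ v) ≤ (p.map φ.toHom).length := edist_le _
      _ = (p.length : ℕ∞) := by rw [Walk.length_map]

lemma iso_edist_eq (φ : A ≃g B) (u v : V) : B.edist (φ u) (φ v) = A.edist u v := by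
  refine le_antisymm (iso_edist_le φ u v) ?_
  have := iso_edist_le φ.symm (φ u) (φ v)
  simpa using this

lemma iso_dist_eq (φ : A ≃g B) (u v : V) : B.dist (φ u) (φ v) = A.dist u v := by
  unfold SimpleGraph.dist
  rw [iso_edist_eq]

lemma iso_ediam_eq (φ : A ≃g B) : B.ediam = A.ediam := by
  apply le_antisymm
  · apply ediam_le_of_edist_le
    intro u v
    have : B.edist u v = A.edist (φ.symm u) (φ.symm v) := by
      rw [← iso_edist_eq φ (φ.symm u) (φ.symm v)]; simp
    rw [this]; exact edist_le_ediam
  · apply ediam_le_of_edist_le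
    intro u v
    rw [← iso_edist_eq φ u v]; exact edist_le_ediam

lemma iso_diam_eq (φ : A ≃g B) : B.diam = A.diam := by
  unfold SimpleGraph.diam
  rw [iso_ediam_eq φ]

lemma iso_resolving_map (φ : A ≃g B) {W : Finset V} (h : IsResolvingSet A W) :
    IsResolvingSet B (W.map φ.toEquiv.toEmbedding) := by
  intro u v huv
  obtain ⟨w, hw, hd⟩ := h (φ.symm u) (φ.symm v) (fun he => huv (by simpa using congrArg φ he))
  refine ⟨φ w, Finset.mem_map_of_mem _ hw, ?_⟩
  rwa [show u = φ (φ.symm u) by simp, show v = φ (φ.symm v) by simp,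
    iso_dist_eq φ (φ.symm u) w, iso_dist_eq φ (φ.symm v) w]

lemma iso_metricDim_eq (φ : A ≃g B) : metricDim B = metricDim A := by
  unfold metricDim
  congr 1
  ext n
  constructor
  · rintro ⟨W, hW, rfl⟩
    exact ⟨W.map φ.symm.toEquiv.toEmbedding, iso_resolving_map φ.symm hW, Finset.card_map _⟩
  · rintro ⟨W, hW, rfl⟩
    exact ⟨W.map φ.toEquiv.toEmbedding, iso_resolving_map φ hW, Finset.card_map _⟩

lemma iso_basis_map (φ : A ≃g B) {W : Finset V} (h : IsMetricBasis A W) :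
    IsMetricBasis B (W.map φ.toEquiv.toEmbedding) := by
  refine ⟨iso_resolving_map φ h.1, ?_⟩
  rw [Finset.card_map, iso_metricDim_eq φ]
  exact h.2

lemma iso_uniquelyDimensional (φ : A ≃g B) (h : UniquelyDimensional A) :
    UniquelyDimensional B := by
  obtain ⟨Bs, hBs, huniq⟩ := h
  refine ⟨Bs.map φ.toEquiv.toEmbedding, iso_basis_map φ hBs, ?_⟩
  intro W hW
  have h2 : W.map φ.symm.toEquiv.toEmbedding = Bs := huniq _ (iso_basis_map φ.symm hW)
  have h3 : (W.map φ.symm.toEquiv.toEmbedding).map φ.toEquiv.toEmbedding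
      = Bs.map φ.toEquiv.toEmbedding := by rw [h2]
  rw [Finset.map_map] at h3
  rw [← h3]
  ext x
  simp

end Transport

/- ## The construction -/
section Construction

variable {k : ℕ}

/-- `near f g` : all coordinates differ by at most 1. -/
def near {k : ℕ} (f g : Fin k → Fin 3) : Prop :=
  ∀ i, (f i).1 ≤ (g i).1 + 1 ∧ (g i).1 ≤ (f i).1 + 1

instance : ∀ {k : ℕ} (f g : Fin k → Fin 3), Decidable (near f g) :=
  fun f g => by unfold near; infer_instance

lemma near_symm {f g : Fin k → Fin 3} (h : near f g) : near g f :=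
  fun i => ⟨(h i).2, (h i).1⟩

/-- The graph: basis vertices `Sum.inl i` and cube vertices `Sum.inr f`. -/
def HH (k : ℕ) : SimpleGraph (Fin k ⊕ (Fin k → Fin 3)) where
  Adj x y :=
    match x, y with
    | Sum.inl _, Sum.inl _ => False
    | Sum.inl i, Sum.inr f => f i = 0
    | Sum.inr f, Sum.inl i => f i = 0
    | Sum.inr f, Sum.inr g => f ≠ g ∧ near f g
  symm := by
    constructor
    rintro (i | f) (j | g) h
    · exact h
    · exact h
    · exact h
    · exact ⟨Ne.symm h.1, near_symm h.2⟩
  loopless := by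
    constructor
    rintro (i | f) h
    · exact h
    · exact h.1 rfl

@[simp] lemma HH_adj_inl_inl {i j : Fin k} : ¬ (HH k).Adj (Sum.inl i) (Sum.inl j) :=
  fun h => h

@[simp] lemma HH_adj_inl_inr {i : Fin k} {f : Fin k → Fin 3} :
    (HH k).Adj (Sum.inl i) (Sum.inr f) ↔ f i = 0 := Iff.rfl

@[simp] lemma HH_adj_inr_inl {i : Fin k} {f : Fin k → Fin 3} :
    (HH k).Adj (Sum.inr f) (Sum.inl i) ↔ f i = 0 := Iff.rfl

@[simp] lemma HH_adj_inr_inr {f g : Fin k → Fin 3} :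
    (HH k).Adj (Sum.inr f) (Sum.inr g) ↔ f ≠ g ∧ near f g := Iff.rfl

lemma update_ne_self {f : Fin k → Fin 3} {i : Fin k} {a : Fin 3} (h : a ≠ f i) :
    Function.update f i a ≠ f := by
  intro he
  exact h (by rw [← he, Function.update_self])

/-- everything is `near` the constant-1 function -/
lemma near_one (f : Fin k → Fin 3) (g : Fin k → Fin 3) (hg : ∀ i, g i = 1) : near f g := by
  intro i
  have h3 : (f i).1 < 3 := (f i).2
  rw [hg i]
  constructor <;> simp <;> omega

lemma HH_preconnected : (HH k).Preconnected := by
  have key : ∀ x : Fin k ⊕ (Fin k → Fin 3), (HH k).Reachable x (Sum.inr (fun _ => 1)) := by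
    rintro (i | f)
    · -- inl i ~ inr (update 1 i 0) ~ inr 1
      have h1 : (HH k).Adj (Sum.inl i) (Sum.inr (Function.update (fun _ => (1 : Fin 3)) i 0)) := by
        simp
      have h2 : (HH k).Adj (Sum.inr (Function.update (fun _ => (1 : Fin 3)) i 0))
          (Sum.inr (fun _ => 1)) := by
        exact HH_adj_inr_inr.mpr ⟨update_ne_self (by decide), near_one _ _ (fun _ => rfl)⟩
      exact (h1.toWalk.append h2.toWalk).reachable
    · rcases eq_or_ne f (fun _ => 1) with rfl | hne
      · rfl
      · exact (SimpleGraph.Adj.toWalk (HH_adj_inr_inr.mpr ⟨hne, near_one f _ (fun _ => rfl)⟩)).reachable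
  intro x y
  exact (key x).trans (key y).symm

lemma HH_connected : (HH k).Connected := by
  rw [connected_iff]
  exact ⟨HH_preconnected, ⟨Sum.inr fun _ => 1⟩⟩

end Construction

/- ## Distance helper lemmas -/
section DistHelpers

variable {V : Type*} {G : SimpleGraph V} {u v : V}

lemma two_le_dist (hr : G.Reachable u v) (h0 : u ≠ v) (h1 : ¬ G.Adj u v) :
    2 ≤ G.dist u v := by
  have hz : G.dist u v ≠ 0 := fun h => h0 (hr.dist_eq_zero_iff.mp h)
  have ho : G.dist u v ≠ 1 := fun h => h1 (dist_eq_one_iff_adj.mp h)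
  omega

lemma three_le_dist (hr : G.Reachable u v) (h0 : u ≠ v) (h1 : ¬ G.Adj u v)
    (h2 : ∀ w, ¬ (G.Adj u w ∧ G.Adj w v)) : 3 ≤ G.dist u v := by
  obtain ⟨p, hp⟩ := hr.exists_walk_length_eq_dist
  rw [← hp]
  match p with
  | SimpleGraph.Walk.nil => exact absurd rfl h0
  | SimpleGraph.Walk.cons h SimpleGraph.Walk.nil => exact absurd h h1
  | SimpleGraph.Walk.cons h (SimpleGraph.Walk.cons h' SimpleGraph.Walk.nil) =>
      exact absurd ⟨h, h'⟩ (h2 _)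
  | SimpleGraph.Walk.cons _ (SimpleGraph.Walk.cons _ (SimpleGraph.Walk.cons _ q)) =>
      simp only [SimpleGraph.Walk.length_cons]; omega

end DistHelpers

/- ## Distances in HH -/
section Distances

variable {k : ℕ}

lemma dist_inr_inl (f : Fin k → Fin 3) (i : Fin k) :
    (HH k).dist (Sum.inr f) (Sum.inl i) = (f i).1 + 1 := by
  have hr : (HH k).Reachable (Sum.inr f) (Sum.inl i) := HH_preconnected _ _
  have h3 : (f i).1 < 3 := (f i).2
  rcases (by omega : (f i).1 = 0 ∨ (f i).1 = 1 ∨ (f i).1 = 2) with h | h | h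
  · -- f i = 0 : adjacent
    rw [h]
    exact dist_eq_one_iff_adj.mpr (HH_adj_inr_inl.mpr (Fin.ext h))
  · -- f i = 1 : distance 2
    rw [h]
    have hne : Function.update f i 0 ≠ f := update_ne_self (by
      intro hc; rw [← hc] at h; simp at h)
    have ha1 : (HH k).Adj (Sum.inr f) (Sum.inr (Function.update f i 0)) := by
      refine HH_adj_inr_inr.mpr ⟨Ne.symm hne, fun l => ?_⟩
      rcases eq_or_ne l i with rfl | hl
      · simp [Function.update_self, h]
      · simp [Function.update_of_ne hl]
    have ha2 : (HH k).Adj (Sum.inr (Function.update f i 0)) (Sum.inl i) := by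
      simp
    refine le_antisymm ?_ (two_le_dist hr (by simp) (by
      simp only [HH_adj_inr_inl]
      intro hc; rw [hc] at h; simp at h))
    calc (HH k).dist _ _ ≤ (ha1.toWalk.append ha2.toWalk).length := dist_le _
      _ = 2 := by simp
  · -- f i = 2 : distance 3
    rw [h]
    set g1 := Function.update f i 1 with hg1
    set g0 := Function.update f i 0 with hg0
    have ha1 : (HH k).Adj (Sum.inr f) (Sum.inr g1) := by
      refine HH_adj_inr_inr.mpr ⟨Ne.symm (update_ne_self (by
        intro hc; rw [← hc] at h; simp at h)), fun l => ?_⟩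
      rcases eq_or_ne l i with rfl | hl
      · simp [hg1, Function.update_self, h]
      · simp [hg1, Function.update_of_ne hl]
    have ha2 : (HH k).Adj (Sum.inr g1) (Sum.inr g0) := by
      refine HH_adj_inr_inr.mpr ⟨?_, fun l => ?_⟩
      · intro hc
        have := congrFun hc i
        simp [hg1, hg0] at this
      · rcases eq_or_ne l i with rfl | hl
        · simp [hg1, hg0, Function.update_self]
        · simp [hg1, hg0, Function.update_of_ne hl]
    have ha3 : (HH k).Adj (Sum.inr g0) (Sum.inl i) := by simp [hg0]
    refine le_antisymm ?_ (three_le_dist hr (by simp) (by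
        simp only [HH_adj_inr_inl]
        intro hc; rw [hc] at h; simp at h) ?_)
    · calc (HH k).dist _ _ ≤ ((ha1.toWalk.append ha2.toWalk).append ha3.toWalk).length :=
          dist_le _
        _ = 3 := by simp
    · rintro (j | g) ⟨hu, hv⟩
      · exact hv
      · have h1 := HH_adj_inr_inr.mp hu
        have h2 := HH_adj_inr_inl.mp hv
        have := (h1.2 i).1
        rw [h2] at this
        simp [h] at this

lemma dist_inl_inr (f : Fin k → Fin 3) (i : Fin k) :
    (HH k).dist (Sum.inl i) (Sum.inr f) = (f i).1 + 1 := by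
  rw [dist_comm, dist_inr_inl]

lemma dist_inl_inl {i j : Fin k} (h : i ≠ j) :
    (HH k).dist (Sum.inl i) (Sum.inl j) = 2 := by
  have hr : (HH k).Reachable (Sum.inl i) (Sum.inl j) := HH_preconnected _ _
  have ha1 : (HH k).Adj (Sum.inl i) (Sum.inr (fun _ => 0)) := by simp
  have ha2 : (HH k).Adj (Sum.inr (fun _ => (0 : Fin 3))) (Sum.inl j) := by simp
  refine le_antisymm ?_ (two_le_dist hr (by simp [h]) (by simp))
  calc (HH k).dist _ _ ≤ (ha1.toWalk.append ha2.toWalk).length := dist_le _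
    _ = 2 := by simp

lemma dist_inr_inr_near {f g : Fin k → Fin 3} (hne : f ≠ g) (hn : near f g) :
    (HH k).dist (Sum.inr f) (Sum.inr g) = 1 :=
  dist_eq_one_iff_adj.mpr (HH_adj_inr_inr.mpr ⟨hne, hn⟩)

lemma dist_inr_inr_far {f g : Fin k → Fin 3} (hne : f ≠ g) (hn : ¬ near f g) :
    (HH k).dist (Sum.inr f) (Sum.inr g) = 2 := by
  have hr : (HH k).Reachable (Sum.inr f) (Sum.inr g) := HH_preconnected _ _
  -- midpoint
  set h : Fin k → Fin 3 :=
    fun l => if (f l).1 ≤ (g l).1 + 1 ∧ (g l).1 ≤ (f l).1 + 1 then f l else 1 with hh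
  obtain ⟨l0, hl0⟩ := not_forall.mp hn
  have hbad : ¬ ((f l0).1 ≤ (g l0).1 + 1 ∧ (g l0).1 ≤ (f l0).1 + 1) := hl0
  have hf3 : ∀ l, (f l).1 < 3 := fun l => (f l).2
  have hg3 : ∀ l, (g l).1 < 3 := fun l => (g l).2
  have hvals : (f l0).1 + (g l0).1 = 2 ∧ (f l0).1 ≠ 1 ∧ (g l0).1 ≠ 1 := by
    have := hf3 l0; have := hg3 l0; omega
  have hh0 : h l0 = 1 := by rw [hh]; simp [hbad]
  have hne1 : Sum.inr (α := Fin k) f ≠ Sum.inr g := by simp [hne]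
  have ha1 : (HH k).Adj (Sum.inr f) (Sum.inr h) := by
    refine HH_adj_inr_inr.mpr ⟨?_, fun l => ?_⟩
    · intro hc
      have := congrFun hc l0
      rw [hh0] at this
      exact hvals.2.1 (by rw [this]; rfl)
    · rw [hh]
      by_cases hc : (f l).1 ≤ (g l).1 + 1 ∧ (g l).1 ≤ (f l).1 + 1
      · simp [hc]
      · have := hf3 l; simp [hc]; omega
  have ha2 : (HH k).Adj (Sum.inr h) (Sum.inr g) := by
    refine HH_adj_inr_inr.mpr ⟨?_, fun l => ?_⟩
    · intro hc
      have := congrFun hc l0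
      rw [hh0] at this
      exact hvals.2.2 (by rw [← this]; rfl)
    · rw [hh]
      by_cases hc : (f l).1 ≤ (g l).1 + 1 ∧ (g l).1 ≤ (f l).1 + 1
      · simp only [if_pos hc]; exact hc
      · have := hg3 l; simp [hc]; omega
  refine le_antisymm ?_ (two_le_dist hr hne1 (by
    rw [HH_adj_inr_inr]; rintro ⟨-, hc⟩; exact hn hc))
  calc (HH k).dist _ _ ≤ (ha1.toWalk.append ha2.toWalk).length := dist_le _
    _ = 2 := by simp

lemma dist_inr_inr_le_two (f g : Fin k → Fin 3) :
    (HH k).dist (Sum.inr f) (Sum.inr g) ≤ 2 := by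
  rcases eq_or_ne f g with rfl | hne
  · rw [SimpleGraph.dist_self]; omega
  · by_cases hn : near f g
    · rw [dist_inr_inr_near hne hn]; omega
    · rw [dist_inr_inr_far hne hn]

end Distances

/- ## The basis and metric dimension -/
section Basis

variable {k : ℕ}

def Bst (k : ℕ) : Finset (Fin k ⊕ (Fin k → Fin 3)) :=
  Finset.univ.map ⟨Sum.inl, Sum.inl_injective⟩

lemma Bst_card : (Bst k).card = k := by simp [Bst]

lemma mem_Bst {x : Fin k ⊕ (Fin k → Fin 3)} : x ∈ Bst k ↔ ∃ i, x = Sum.inl i := by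
  simp [Bst, eq_comm]

lemma Bst_resolving : IsResolvingSet (HH k) (Bst k) := by
  rintro (i | f) (j | g) hne
  · refine ⟨Sum.inl i, mem_Bst.mpr ⟨i, rfl⟩, ?_⟩
    rw [SimpleGraph.dist_self, dist_inl_inl (show j ≠ i by rintro rfl; exact hne rfl)]
    omega
  · refine ⟨Sum.inl i, mem_Bst.mpr ⟨i, rfl⟩, ?_⟩
    rw [SimpleGraph.dist_self, dist_inr_inl]
    omega
  · refine ⟨Sum.inl j, mem_Bst.mpr ⟨j, rfl⟩, ?_⟩
    rw [SimpleGraph.dist_self, dist_inr_inl]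
    omega
  · have hfg : f ≠ g := by rintro rfl; exact hne rfl
    obtain ⟨i, hi⟩ := Function.ne_iff.mp hfg
    refine ⟨Sum.inl i, mem_Bst.mpr ⟨i, rfl⟩, ?_⟩
    rw [dist_inr_inl, dist_inr_inl]
    have : (f i).1 ≠ (g i).1 := fun hc => hi (Fin.ext hc)
    omega

/-- The coding function used for the cardinality lower bound. -/
noncomputable def code (W : Finset (Fin k ⊕ (Fin k → Fin 3))) (f : Fin k → Fin 3)
    (w : {x // x ∈ W}) : Fin 3 :=
  ⟨(HH k).dist (Sum.inr f) w.1 % 3, Nat.mod_lt _ (by omega)⟩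

lemma code_injective {W : Finset (Fin k ⊕ (Fin k → Fin 3))}
    (hW : IsResolvingSet (HH k) W) : Function.Injective (code W) := by
  intro f g hfg
  by_contra hne
  obtain ⟨w, hw, hd⟩ := hW (Sum.inr f) (Sum.inr g) (by simpa using hne)
  have hcode := congrFun hfg ⟨w, hw⟩
  simp only [code, Fin.mk.injEq] at hcode
  rcases w with i | h
  · rw [dist_inr_inl] at hcode hd
    rw [dist_inr_inl] at hcode hd
    have := (f i).2; have := (g i).2
    omega
  · have h1 := dist_inr_inr_le_two f h
    have h2 := dist_inr_inr_le_two g h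
    omega

lemma resolving_card_ge {W : Finset (Fin k ⊕ (Fin k → Fin 3))}
    (hW : IsResolvingSet (HH k) W) : k ≤ W.card := by
  have hcard := Fintype.card_le_of_injective _ (code_injective hW)
  rw [Fintype.card_fun, Fintype.card_fun, Fintype.card_fin, Fintype.card_fin,
    Fintype.card_coe] at hcard
  exact (Nat.pow_le_pow_iff_right (by norm_num : 1 < 3)).mp hcard

lemma metricDim_HH : metricDim (HH k) = k := by
  apply le_antisymm
  · exact Nat.sInf_le ⟨Bst k, Bst_resolving, Bst_card⟩
  · exact le_csInf ⟨k, Bst k, Bst_resolving, Bst_card⟩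
      (fun n ⟨W, hW, hc⟩ => hc ▸ resolving_card_ge hW)

end Basis

/- ## Uniqueness of the metric basis -/
section Uniqueness

variable {k : ℕ}

lemma unique_resolving {W : Finset (Fin k ⊕ (Fin k → Fin 3))}
    (hW : IsResolvingSet (HH k) W) (hcard : W.card = k) (hk : 2 ≤ k) :
    W = Bst k := by
  classical
  have hnoinr : ∀ g : Fin k → Fin 3, Sum.inr g ∉ W := by
    intro g hg
    -- at most one `inr` element in `W`
    have honeinr : ∀ g', Sum.inr g' ∈ W → g' = g := by
      intro g' hg'
      by_contra hne'
      have hbij : Function.Bijective (code W) := by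
        rw [Fintype.bijective_iff_injective_and_card]
        refine ⟨code_injective hW, ?_⟩
        rw [Fintype.card_fun, Fintype.card_fun, Fintype.card_fin, Fintype.card_fin,
          Fintype.card_coe, hcard]
      obtain ⟨f, hf⟩ := hbij.2 (fun _ => ⟨0, by omega⟩)
      have key : ∀ (g'' : Fin k → Fin 3) (hg'' : Sum.inr g'' ∈ W), f = g'' := by
        intro g'' hg''
        have e1 : code W f ⟨Sum.inr g'', hg''⟩ = ⟨0, by omega⟩ := congrFun hf _
        simp only [code, Fin.mk.injEq] at e1
        have hle := dist_inr_inr_le_two (k := k) f g''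
        have h0 : (HH k).dist (Sum.inr f) (Sum.inr g'') = 0 := by omega
        have := ((HH_preconnected _ _).dist_eq_zero_iff).mp h0
        exact Sum.inr_injective this
      exact hne' ((key g' hg').symm.trans (key g hg))
    set I : Finset (Fin k) := Finset.univ.filter (fun i => Sum.inl i ∈ W) with hI
    have hWeq : W = insert (Sum.inr g) (I.map ⟨Sum.inl, Sum.inl_injective⟩) := by
      ext x
      constructor
      · intro hx
        rcases x with i | g'
        · exact Finset.mem_insert_of_mem (by simp [hI, hx])
        · rw [honeinr g' hx]; exact Finset.mem_insert_self _ _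
      · intro hx
        rcases Finset.mem_insert.mp hx with rfl | hx
        · exact hg
        · obtain ⟨i, hi, rfl⟩ := Finset.mem_map.mp hx
          simpa [hI] using hi
    have hnotmem : Sum.inr g ∉ I.map ⟨Sum.inl, Sum.inl_injective⟩ := by
      intro hc
      obtain ⟨i, -, hi⟩ := Finset.mem_map.mp hc
      exact Sum.inl_ne_inr hi
    have hIcard : I.card = k - 1 := by
      have := hcard
      rw [hWeq, Finset.card_insert_of_notMem hnotmem, Finset.card_map] at this
      omega
    have hcompl : Iᶜ.card = 1 := by
      rw [Finset.card_compl, hIcard]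
      simp
      omega
    obtain ⟨i0, hi0⟩ := Finset.card_eq_one.mp hcompl
    have hi0notI : i0 ∉ I := by
      have : i0 ∈ Iᶜ := hi0 ▸ Finset.mem_singleton_self i0
      simpa using this
    have hmemI : ∀ i, i ≠ i0 → i ∈ I := by
      intro i hi
      by_contra hc
      have : i ∈ Iᶜ := Finset.mem_compl.mpr hc
      rw [hi0, Finset.mem_singleton] at this
      exact hi this
    -- build a collision pair
    obtain ⟨f0, f1, hne01, hagree, hdist⟩ :
        ∃ f0 f1 : Fin k → Fin 3, f0 ≠ f1 ∧ (∀ i, i ≠ i0 → f0 i = f1 i) ∧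
          (HH k).dist (Sum.inr f0) (Sum.inr g) = (HH k).dist (Sum.inr f1) (Sum.inr g) := by
      by_cases hA : ∃ l, l ≠ i0 ∧ (g l).1 ≠ 1
      · obtain ⟨l, hl, hgl⟩ := hA
        have hg3 : (g l).1 < 3 := (g l).2
        set flipv : Fin 3 := ⟨2 - (g l).1, by omega⟩ with hflipv
        set base := Function.update g l flipv with hbase
        refine ⟨Function.update base i0 0, Function.update base i0 1, ?_, ?_, ?_⟩
        · intro hc
          have := congrFun hc i0
          simp [Function.update_self] at this
        · intro i hi
          simp [Function.update_of_ne hi]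
        · have hfar : ∀ a : Fin 3, ¬ near (Function.update base i0 a) g := by
            intro a hn
            have := hn l
            rw [Function.update_of_ne hl, hbase, Function.update_self] at this
            simp only [hflipv] at this
            omega
          have hneg : ∀ a : Fin 3, Function.update base i0 a ≠ g := by
            intro a hc
            have := congrFun hc l
            rw [Function.update_of_ne hl, hbase, Function.update_self] at this
            have := congrArg Fin.val this
            simp only [hflipv] at this
            omega
          rw [dist_inr_inr_far (hneg 0) (hfar 0), dist_inr_inr_far (hneg 1) (hfar 1)]
      · push_neg at hA
        have hone : ∀ l, l ≠ i0 → g l = 1 := by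
          intro l hl
          exact Fin.ext (by have := hA l hl; have h3 := (g l).2; have := (g l); omega)
        obtain ⟨l0, hl0⟩ := Fintype.exists_ne_of_one_lt_card (by simp; omega) i0
        set a : Fin 3 := if (g i0).1 = 2 then 1 else 0 with ha
        set b : Fin 3 := if (g i0).1 = 2 then 2 else 1 with hb
        have hab : a ≠ b := by
          rw [ha, hb]; split <;> decide
        have hnear : ∀ c : Fin 3, (c.1 ≤ (g i0).1 + 1 ∧ (g i0).1 ≤ c.1 + 1) →
            near (Function.update (Function.update g l0 0) i0 c) g := by
          intro c hc l
          rcases eq_or_ne l i0 with rfl | hli0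
          · rw [Function.update_self]; exact hc
          · rw [Function.update_of_ne hli0]
            rcases eq_or_ne l l0 with rfl | hll0
            · rw [Function.update_self, hone l hl0]
              simp
            · rw [Function.update_of_ne hll0]
              omega
        have hgne : ∀ c : Fin 3, Function.update (Function.update g l0 0) i0 c ≠ g := by
          intro c hc
          have := congrFun hc l0
          rw [Function.update_of_ne hl0, Function.update_self] at this
          rw [hone l0 hl0] at this
          exact absurd (congrArg Fin.val this) (by norm_num)
        have hg2 : (g i0).1 < 3 := (g i0).2
        have hcond_a : a.1 ≤ (g i0).1 + 1 ∧ (g i0).1 ≤ a.1 + 1 := by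
          rw [ha]; split <;> simp <;> omega
        have hcond_b : b.1 ≤ (g i0).1 + 1 ∧ (g i0).1 ≤ b.1 + 1 := by
          rw [hb]; split <;> simp <;> omega
        refine ⟨Function.update (Function.update g l0 0) i0 a,
          Function.update (Function.update g l0 0) i0 b, ?_, ?_, ?_⟩
        · intro hc
          have := congrFun hc i0
          simp only [Function.update_self] at this
          exact hab this
        · intro i hi
          simp [Function.update_of_ne hi]
        · rw [dist_inr_inr_near (hgne a) (hnear a hcond_a),
            dist_inr_inr_near (hgne b) (hnear b hcond_b)]
    obtain ⟨w, hw, hd⟩ := hW (Sum.inr f0) (Sum.inr f1) (by simpa using hne01)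
    rcases w with i | g'
    · have hii0 : i ≠ i0 := by
        rintro rfl
        exact hi0notI (by simp [hI]; exact hw)
      rw [dist_inr_inl, dist_inr_inl, hagree i hii0] at hd
      exact hd rfl
    · rw [honeinr g' hw] at hd
      exact hd hdist
  -- now W consists only of inl's, and has card k, so W = Bst k
  apply Finset.eq_of_subset_of_card_le
  · intro x hx
    rcases x with i | g
    · exact mem_Bst.mpr ⟨i, rfl⟩
    · exact absurd hx (hnoinr g)
  · rw [Bst_card, hcard]

lemma HH_uniquelyDimensional (hk : 2 ≤ k) : UniquelyDimensional (HH k) :=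
  ⟨Bst k, ⟨Bst_resolving, by rw [Bst_card, metricDim_HH]⟩,
    fun W hW => unique_resolving hW.1 (by rw [hW.2, metricDim_HH]) hk⟩

end Uniqueness

/- ## Diameter -/
section Diameter

variable {k : ℕ}

lemma HH_dist_le_three (u v : Fin k ⊕ (Fin k → Fin 3)) : (HH k).dist u v ≤ 3 := by
  rcases u with i | f <;> rcases v with j | g
  · rcases eq_or_ne i j with rfl | h
    · simp [SimpleGraph.dist_self]
    · rw [dist_inl_inl h]; omega
  · rw [dist_inl_inr]
    have := (g i).2
    omega
  · rw [dist_inr_inl]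
    have := (f j).2
    omega
  · have := dist_inr_inr_le_two f g
    omega

lemma HH_ediam (hk : 2 ≤ k) : (HH k).ediam = 3 := by
  apply le_antisymm
  · apply ediam_le_of_edist_le
    intro u v
    have hne : (HH k).edist u v ≠ ⊤ :=
      edist_ne_top_iff_reachable.mpr (HH_preconnected u v)
    rw [← ENat.coe_toNat hne]
    exact_mod_cast HH_dist_le_three u v
  · have i0 : Fin k := ⟨0, by omega⟩
    have hd : (HH k).dist (Sum.inr (fun _ => 2)) (Sum.inl i0) = 3 := by
      rw [dist_inr_inl]; rfl
    have hne : (HH k).edist (Sum.inr (fun _ => (2 : Fin 3))) (Sum.inl i0) ≠ ⊤ :=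
      edist_ne_top_iff_reachable.mpr (HH_preconnected _ _)
    have : (HH k).edist (Sum.inr (fun _ => (2 : Fin 3))) (Sum.inl i0) = 3 := by
      rw [← ENat.coe_toNat hne]
      rw [show ((HH k).edist (Sum.inr (fun _ => (2 : Fin 3))) (Sum.inl i0)).toNat
        = (HH k).dist (Sum.inr (fun _ => (2 : Fin 3))) (Sum.inl i0) from rfl, hd]
      rfl
    calc (3 : ℕ∞) = (HH k).edist (Sum.inr (fun _ => (2 : Fin 3))) (Sum.inl i0) := this.symm
      _ ≤ (HH k).ediam := edist_le_ediam

lemma HH_diam (hk : 2 ≤ k) : (HH k).diam = 3 := by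
  rw [SimpleGraph.diam, HH_ediam hk]
  rfl

end Diameter


theorem stmt12 (k : ℕ) (hk : 2 ≤ k) :
    ∃ G : SimpleGraph (Fin (k + 3 ^ k)), G.Connected ∧ G.diam = 3 ∧
      UniquelyKDimensional G k := by
  have hcardV : Fintype.card (Fin k ⊕ (Fin k → Fin 3)) = k + 3 ^ k := by
    simp [Fintype.card_fun]
  refine ⟨(HH k).overFin hcardV, ?_, ?_, ?_, ?_⟩
  · exact ((HH k).overFinIso hcardV).connected_iff.mp HH_connected
  · rw [iso_diam_eq ((HH k).overFinIso hcardV)]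
    exact HH_diam hk
  · exact iso_uniquelyDimensional ((HH k).overFinIso hcardV) (HH_uniquelyDimensional hk)
  · rw [iso_metricDim_eq ((HH k).overFinIso hcardV)]
    exact metricDim_HH
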